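/- The function g(u) = (4(1 − u) + 2(u + 1)·ln u)/((u − 1)³) defined for u ∈ (0, 1) is a probability density: ∫₀¹ g(u) du = 1. -/

import Mathlib

open Real Set Filter MeasureTheory intervalIntegral
open scoped Topology

noncomputable def Faux9 (u : ℝ) : ℝ := (2*(u-1) - 2*u*Real.log u)/(u-1)^2

lemma r_bound9 {u : ℝ} (h2 : 1/2 ≤ u) (h1 : u < 1) :
    |Real.log u + (1-u) + (1-u)^2/2| ≤ 2*(1-u)^3 := by
  have h0 : (0:ℝ) ≤ 1 - u := by linarith
  have hx : |1 - u| < 1 := by rw [abs_of_nonneg h0]; linarith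
  have h := Real.abs_log_sub_add_sum_range_le hx 2
  simp only [Finset.sum_range_succ, Finset.sum_range_zero] at h
  norm_num at h
  rw [abs_of_nonneg h0] at h
  have habs : |Real.log u + (1-u) + (1-u)^2/2| = |1 - u + (1 - u) ^ 2 / 2 + Real.log u| := by
    ring_nf
  have hle : (1-u)^3/(1-(1-u)) ≤ 2*(1-u)^3 := by
    rw [div_le_iff₀ (by linarith)]
    nlinarith [pow_nonneg h0 3]
  rw [habs]
  linarith

lemma hasDerivAt_Faux9 {u : ℝ} (hu : u ∈ Set.Ioo (0:ℝ) 1) :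
    HasDerivAt Faux9 ((4 * (1 - u) + 2 * (u + 1) * Real.log u) / (u - 1) ^ 3) u := by
  obtain ⟨hu0, hu1⟩ := hu
  have hne : u ≠ 0 := ne_of_gt hu0
  have hne1 : u - 1 ≠ 0 := by intro h; apply absurd h; intro h; linarith [sub_eq_zero.mp h]
  have hN : HasDerivAt (fun v : ℝ => 2*(v-1) - 2*v*Real.log v)
      (2 - (2*Real.log u + 2*u*u⁻¹)) u := by
    have ha : HasDerivAt (fun v : ℝ => 2*(v-1)) 2 u := by
      simpa using ((hasDerivAt_id u).sub_const 1).const_mul 2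
    have hb : HasDerivAt (fun v : ℝ => 2*v*Real.log v) (2*Real.log u + 2*u*u⁻¹) u := by
      have := ((hasDerivAt_id u).const_mul 2).mul (Real.hasDerivAt_log hne)
      exact this.congr_deriv (by simp only [id, mul_one])
    exact ha.sub hb
  have hD : HasDerivAt (fun v : ℝ => (v-1)^2) (2*(u-1)) u := by
    exact (((hasDerivAt_id u).sub_const 1).pow 2).congr_deriv (by simp)
  have := hN.div hD (pow_ne_zero 2 hne1)
  refine this.congr_deriv ?_
  field_simp
  ring

lemma tendsto_Faux9_zero : Tendsto Faux9 (𝓝[>] (0:ℝ)) (𝓝 (-2)) := by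
  have hb : Tendsto (fun u : ℝ => 2*u*Real.log u) (𝓝[>] (0:ℝ)) (𝓝 0) := by
    have := (tendsto_log_mul_rpow_nhdsGT_zero one_pos).const_mul 2
    rw [mul_zero] at this
    refine this.congr' ?_
    filter_upwards [self_mem_nhdsWithin] with x hx
    rw [Real.rpow_one]; ring
  have ha : Tendsto (fun u : ℝ => 2*(u-1)) (𝓝[>] (0:ℝ)) (𝓝 (-2)) := by
    have : Tendsto (fun u : ℝ => 2*(u-1)) (𝓝 (0:ℝ)) (𝓝 (2*((0:ℝ)-1))) :=
      (continuous_const.mul (continuous_id.sub continuous_const)).tendsto 0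
    norm_num at this
    exact this.mono_left nhdsWithin_le_nhds
  have hnum : Tendsto (fun u : ℝ => 2*(u-1) - 2*u*Real.log u) (𝓝[>] (0:ℝ)) (𝓝 (-2)) := by
    simpa using ha.sub hb
  have hden : Tendsto (fun u : ℝ => (u-1)^2) (𝓝[>] (0:ℝ)) (𝓝 1) := by
    have : Tendsto (fun u : ℝ => (u-1)^2) (𝓝 (0:ℝ)) (𝓝 (((0:ℝ)-1)^2)) :=
      ((continuous_id.sub continuous_const).pow 2).tendsto 0
    norm_num at this
    exact this.mono_left nhdsWithin_le_nhds
  have := hnum.div hden one_ne_zero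
  rw [div_one] at this
  exact this

lemma tendsto_Faux9_one : Tendsto Faux9 (𝓝[<] (1:ℝ)) (𝓝 (-1)) := by
  have key : ∀ u ∈ Set.Ico (1/2 : ℝ) 1, ‖Faux9 u + 1‖ ≤ 5*(1-u) := by
    intro u hu
    obtain ⟨h2, h1⟩ := hu
    have h0 : (0:ℝ) ≤ 1 - u := by linarith
    have hden : ((u:ℝ)-1)^2 ≠ 0 := pow_ne_zero 2 (by intro h; rw [sub_eq_zero] at h; linarith [h.symm ▸ h1])
    have hr := r_bound9 h2 h1
    set r := Real.log u + (1-u) + (1-u)^2/2 with hrdef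
    have hF : Faux9 u + 1 = (-(1-u)^3 - 2*u*r)/(u-1)^2 := by
      rw [Faux9, div_add' _ _ _ hden]
      congr 1
      rw [hrdef]; ring
    rw [hF, Real.norm_eq_abs, abs_div, abs_of_nonneg (sq_nonneg (u-1))]
    rw [div_le_iff₀ (by positivity)]
    have habs : |(-(1-u)^3 - 2*u*r)| ≤ (1-u)^3 + 2*(2*(1-u)^3) := by
      calc |(-(1-u)^3 - 2*u*r)| ≤ |(-(1-u)^3)| + |2*u*r| := abs_sub _ _
        _ ≤ (1-u)^3 + 2*(2*(1-u)^3) := by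
            rw [abs_neg, abs_of_nonneg (by positivity), abs_mul, abs_mul]
            have : |u| ≤ 1 := by rw [abs_of_nonneg (by linarith)]; linarith
            have hmul : |u| * |r| ≤ 1 * (2*(1-u)^3) := mul_le_mul this hr (abs_nonneg r) zero_le_one
            rw [show |(2:ℝ)| = 2 by norm_num]
            nlinarith [hmul]
    nlinarith [habs, pow_nonneg h0 3]
  have h0 : Tendsto (fun u => Faux9 u + 1) (𝓝[<] (1:ℝ)) (𝓝 0) := by
    apply squeeze_zero_norm' (a := fun u => 5*(1-u))
    · filter_upwards [Ico_mem_nhdsLT_of_mem (by norm_num : (1:ℝ) ∈ Set.Ioc (1/2) 1)] with u hu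
      exact key u hu
    · have : Tendsto (fun u : ℝ => 5*(1-u)) (𝓝 (1:ℝ)) (𝓝 (5*(1-1))) :=
        (continuous_const.mul (continuous_const.sub continuous_id)).tendsto 1
      norm_num at this
      exact this.mono_left nhdsWithin_le_nhds
  have := h0.sub_const 1
  norm_num at this
  refine this.congr ?_
  intro u; ring
lemma g9_bound {u : ℝ} (hu : u ∈ Set.Ioc (0:ℝ) 1) :
    ‖(4 * (1 - u) + 2 * (u + 1) * Real.log u) / (u - 1) ^ 3‖
      ≤ 41 + 64 * u ^ (-(1/2) : ℝ) := by
  obtain ⟨hu0, hu1⟩ := hu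
  have hrpow : (0:ℝ) < u ^ (-(1/2) : ℝ) := Real.rpow_pos_of_pos hu0 _
  rw [Real.norm_eq_abs, abs_div]
  rcases lt_or_ge u (1/2) with hcase | hcase
  · -- u ∈ (0, 1/2)
    have hlog_neg : Real.log u < 0 := Real.log_neg hu0 (by linarith)
    have hlogb : -Real.log u ≤ 2 * u ^ (-(1/2) : ℝ) := by
      have h1 : Real.log (u ^ (-(1/2):ℝ)) = (-(1/2)) * Real.log u := Real.log_rpow hu0 _
      have h2 : Real.log (u ^ (-(1/2):ℝ)) ≤ u ^ (-(1/2):ℝ) - 1 :=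
        Real.log_le_sub_one_of_pos hrpow
      linarith
    have hdenabs : |(u-1)^3| = (1-u)^3 := by
      rw [show (u-1)^3 = -((1-u)^3) by ring, abs_neg,
        abs_of_nonneg (pow_nonneg (show (0:ℝ) ≤ 1-u by linarith) 3)]
    have hden : (1:ℝ)/8 ≤ |(u-1)^3| := by
      rw [hdenabs]
      calc (1:ℝ)/8 = (1/2)^3 := by norm_num
        _ ≤ (1-u)^3 := pow_le_pow_left₀ (by norm_num) (by linarith) 3
    have hnum : |4*(1-u)+2*(u+1)*Real.log u| ≤ 4 + 3*(-Real.log u) := by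
      calc |4*(1-u)+2*(u+1)*Real.log u| ≤ |4*(1-u)| + |2*(u+1)*Real.log u| := abs_add_le _ _
        _ ≤ 4 + 3*(-Real.log u) := by
            rw [abs_of_nonneg (by nlinarith), abs_mul, abs_of_nonneg (by positivity : (0:ℝ) ≤ 2*(u+1)),
              abs_of_neg hlog_neg]
            nlinarith
    calc |4*(1-u)+2*(u+1)*Real.log u| / |(u-1)^3|
        ≤ (4 + 3*(-Real.log u)) / (1/8) := div_le_div₀ (by nlinarith) hnum (by norm_num) hden
      _ = 32 + 24*(-Real.log u) := by ring
      _ ≤ 41 + 64 * u ^ (-(1/2) : ℝ) := by nlinarith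
  · rcases eq_or_lt_of_le hu1 with heq | hlt
    · rw [heq]; norm_num
    · -- u ∈ [1/2, 1)
      have h0 : (0:ℝ) ≤ 1 - u := by linarith
      have hr := r_bound9 hcase hlt
      set r := Real.log u + (1-u) + (1-u)^2/2 with hrdef
      have hdenabs : |(u-1)^3| = (1-u)^3 := by
        rw [show (u-1)^3 = -((1-u)^3) by ring, abs_neg, abs_of_nonneg (pow_nonneg h0 3)]
      have hkey : 4*(1-u)+2*(u+1)*Real.log u = (1-u)^3 + 2*(u+1)*r := by
        rw [hrdef]; ring
      have hnum : |4*(1-u)+2*(u+1)*Real.log u| ≤ 9*(1-u)^3 := by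
        rw [hkey]
        calc |(1-u)^3 + 2*(u+1)*r| ≤ |(1-u)^3| + |2*(u+1)*r| := abs_add_le _ _
          _ ≤ 9*(1-u)^3 := by
              rw [abs_of_nonneg (pow_nonneg h0 3), abs_mul,
                abs_of_nonneg (by positivity : (0:ℝ) ≤ 2*(u+1))]
              have hmul : (2*(u+1)) * |r| ≤ 4 * (2*(1-u)^3) :=
                mul_le_mul (by linarith) hr (abs_nonneg r) (by norm_num)
              nlinarith [pow_nonneg h0 3]
      have : |4*(1-u)+2*(u+1)*Real.log u| / |(u-1)^3| ≤ 9 := by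
        rw [hdenabs, div_le_iff₀ (pow_pos (by linarith : (0:ℝ) < 1-u) 3)]
        nlinarith
      nlinarith

lemma g9_intervalIntegrable :
    IntervalIntegrable (fun u : ℝ => (4 * (1 - u) + 2 * (u + 1) * Real.log u) / (u - 1) ^ 3)
      volume 0 1 := by
  have hM : IntervalIntegrable (fun u : ℝ => 41 + 64 * u ^ (-(1/2) : ℝ)) volume 0 1 := by
    apply IntervalIntegrable.add intervalIntegrable_const
    exact (intervalIntegrable_rpow' (by norm_num)).const_mul 64
  rw [intervalIntegrable_iff_integrableOn_Ioc_of_le zero_le_one] at hM ⊢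
  apply hM.mono'
  · exact (((measurable_const.mul (measurable_const.sub measurable_id)).add
        ((measurable_const.mul (measurable_id.add measurable_const)).mul Real.measurable_log)).div
        ((measurable_id.sub measurable_const).pow_const 3)).aestronglyMeasurable
  · exact (ae_restrict_iff' measurableSet_Ioc).2 (Filter.Eventually.of_forall fun u hu => g9_bound hu)

theorem stmt_9 :
    ∫ u in (0:ℝ)..1,
        (4 * (1 - u) + 2 * (u + 1) * Real.log u) / (u - 1) ^ 3 = 1 := by
  have h := intervalIntegral.integral_eq_sub_of_hasDerivAt_of_tendsto
    (f := Faux9) (f' := fun u : ℝ => (4 * (1 - u) + 2 * (u + 1) * Real.log u) / (u - 1) ^ 3)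
    zero_lt_one (fun x hx => hasDerivAt_Faux9 hx) g9_intervalIntegrable
    tendsto_Faux9_zero tendsto_Faux9_one
  exact h.trans (by norm_num)
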